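/- Let κ ∈ ℂ, δ > 0, S > 0, and suppose R > 1 satisfies exp(R−1) > −log δ and exp(R) ≥ exp(R−1) + S + 1 + |κ|. If z ∈ ℂ satisfies |Im(E_κ^n(z))| < S and Re(E_κ^n(z)) > log δ for all n ≥ 1, and z is not an escaping point of E_κ, then Re(z) < R. -/

import Mathlib

open Filter Complex

/-- If all forward iterates of `z` under `E_κ(w) = exp w + κ` have imaginary part
bounded by `S` and real part above `log δ`, and `z` is not an escaping point,
then `Re z < R`. -/
theorem non_escaping_has_small_re (κ : ℂ) (δ S R : ℝ) (hδ : 0 < δ) (hS : 0 < S)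
    (hR : 1 < R)
    (hR1 : Real.exp (R - 1) > -Real.log δ)
    (hR2 : Real.exp R ≥ Real.exp (R - 1) + S + 1 + ‖κ‖)
    (z : ℂ)
    (him : ∀ n : ℕ, 1 ≤ n → |((fun w => Complex.exp w + κ)^[n] z).im| < S)
    (hre : ∀ n : ℕ, 1 ≤ n → ((fun w => Complex.exp w + κ)^[n] z).re > Real.log δ)
    (hnoesc : ¬ Tendsto (fun n => ‖(fun w => Complex.exp w + κ)^[n] z‖)
        atTop atTop) :
    z.re < R := by
  by_contra hcon
  push_neg at hcon
  set f : ℂ → ℂ := fun w => Complex.exp w + κ with hf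
  have hlog : Real.log δ > -Real.exp (R - 1) := by linarith
  have hRe1 : R ≤ Real.exp (R - 1) := by
    have := Real.add_one_le_exp (R - 1); linarith
  have key : ∀ n : ℕ, R + n ≤ (f^[n] z).re := by
    intro n
    induction n with
    | zero => simpa using hcon
    | succ n ih =>
      have hiter : f^[n+1] z = Complex.exp (f^[n] z) + κ := by
        rw [Function.iterate_succ_apply']
      set w := f^[n] z with hw
      set w1 := f^[n+1] z with hw1
      have himS : |w1.im| < S := him (n+1) (by omega)
      have hreδ : w1.re > Real.log δ := hre (n+1) (by omega)
      have hexp : Complex.exp w = w1 - κ := by rw [hiter]; ring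
      have habs1 : Real.exp w.re ≤ ‖w1‖ + ‖κ‖ := by
        have h1 : ‖Complex.exp w‖ = Real.exp w.re := Complex.norm_exp w
        have h2 : ‖w1 - κ‖ ≤ ‖w1‖ + ‖κ‖ :=
          norm_sub_le w1 κ
        rw [← h1, hexp]; exact h2
      have hmono : Real.exp (R + n) ≤ Real.exp w.re := Real.exp_le_exp.mpr ih
      have hen : Real.exp R + n ≤ Real.exp (R + n) := by
        have h1 : (n : ℝ) + 1 ≤ Real.exp n := Real.add_one_le_exp n
        have h2 : (1:ℝ) ≤ Real.exp R := Real.one_le_exp (by linarith)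
        calc Real.exp R + (n:ℝ) ≤ Real.exp R * ((n:ℝ) + 1) := by nlinarith
          _ ≤ Real.exp R * Real.exp n := by nlinarith [Real.exp_pos R]
          _ = Real.exp (R + n) := (Real.exp_add R n).symm
      have hbig : Real.exp (R - 1) + S + 1 + n ≤ ‖w1‖ := by linarith
      have htri : ‖w1‖ ≤ |w1.re| + |w1.im| := Complex.norm_le_abs_re_add_abs_im w1
      have hpos : 0 < w1.re := by
        by_contra hneg
        push_neg at hneg
        have : |w1.re| = -w1.re := abs_of_nonpos hneg
        have hre2 : |w1.re| < Real.exp (R - 1) := by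
          rw [this]; linarith
        have : ‖w1‖ < Real.exp (R - 1) + S := by
          calc ‖w1‖ ≤ |w1.re| + |w1.im| := htri
            _ < Real.exp (R - 1) + S := by linarith
        linarith [(Nat.cast_nonneg n : (0:ℝ) ≤ n)]
      have : ‖w1‖ ≤ w1.re + |w1.im| := by
        rwa [abs_of_pos hpos] at htri
      push_cast
      linarith
  apply hnoesc
  have h1 : Tendsto (fun n : ℕ => R + (n : ℝ)) atTop atTop :=
    tendsto_atTop_add_const_left _ _ tendsto_natCast_atTop_atTop
  exact tendsto_atTop_mono (fun n => (key n).trans (Complex.re_le_norm _)) h1
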